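/- (Unruh's two-projection bound) Let C be a finite set, |ψ⟩ a unit vector in a finite-dimensional Hilbert space H, and for each c ∈ C let W_c be a unitary on H and P_c an orthogonal projector on H. Define ε = E_{c←C} ‖P_c W_c |ψ⟩‖² and δ = E_{c₁,c₂←C} ‖P_{c₂} W_{c₂} W_{c₁}† P_{c₁} W_{c₁} |ψ⟩‖². Then δ ≥ ε³. -/

import Mathlib

open ContinuousLinearMap

open scoped InnerProductSpace

set_option maxHeartbeats 1000000 in
theorem stmt11 {H : Type*} [NormedAddCommGroup H] [InnerProductSpace ℂ H]
    [FiniteDimensional ℂ H] {C : Type*} [Fintype C] [Nonempty C]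
    (ψ : H) (hψ : ‖ψ‖ = 1)
    (W P : C → H →L[ℂ] H)
    (hWl : ∀ c, (adjoint (W c)).comp (W c) = ContinuousLinearMap.id ℂ H)
    (hWr : ∀ c, (W c).comp (adjoint (W c)) = ContinuousLinearMap.id ℂ H)
    (hPidem : ∀ c, (P c).comp (P c) = P c)
    (hPsa : ∀ c, IsSelfAdjoint (P c))
    (ε δ : ℝ)
    (hε : ε = (Fintype.card C : ℝ)⁻¹ * ∑ c, ‖P c (W c ψ)‖ ^ 2)
    (hδ : δ = ((Fintype.card C : ℝ) ^ 2)⁻¹ * ∑ c₁, ∑ c₂,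
      ‖P c₂ (W c₂ (adjoint (W c₁) (P c₁ (W c₁ ψ))))‖ ^ 2) :
    ε ^ 3 ≤ δ := by
  classical
  set n : ℝ := (Fintype.card C : ℝ) with hn
  have hn0 : 0 < n := by
    rw [hn]
    exact_mod_cast Fintype.card_pos
  -- pointwise versions of hypotheses
  have hWr' : ∀ c (x : H), W c (adjoint (W c) x) = x := by
    intro c x
    have := congrArg (fun f : H →L[ℂ] H => f x) (hWr c)
    simpa using this
  have hP' : ∀ c (x : H), P c (P c x) = P c x := by
    intro c x
    have := congrArg (fun f : H →L[ℂ] H => f x) (hPidem c)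
    simpa using this
  -- the projector Q c = W c† P c W c
  set Q : C → H →L[ℂ] H := fun c => (adjoint (W c)).comp ((P c).comp (W c)) with hQdef
  have hQQ : ∀ c (x : H), Q c (Q c x) = Q c x := by
    intro c x
    simp [hQdef, comp_apply, hWr', hP']
  have hQadj : ∀ c, adjoint (Q c) = Q c := by
    intro c
    have hP : adjoint (P c) = P c := by
      exact hPsa c
    rw [hQdef]
    rw [adjoint_comp, adjoint_comp, adjoint_adjoint, hP, comp_assoc]
  have hQinner : ∀ c (a b : H), ⟪Q c a, b⟫_ℂ = ⟪a, Q c b⟫_ℂ := by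
    intro c a b
    conv_lhs => rw [← hQadj c]
    exact adjoint_inner_left (𝕜 := ℂ) (Q c) b a
  -- adjoint of W is norm preserving
  have hWnorm : ∀ c (x : H), ‖adjoint (W c) x‖ = ‖x‖ := by
    intro c x
    have h1 : ⟪adjoint (W c) x, adjoint (W c) x⟫_ℂ = ⟪x, x⟫_ℂ := by
      rw [adjoint_inner_left, hWr']
    have h2 : ‖adjoint (W c) x‖ ^ 2 = ‖x‖ ^ 2 := by
      rw [← inner_self_eq_norm_sq (𝕜 := ℂ), ← inner_self_eq_norm_sq (𝕜 := ℂ), h1]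
    calc ‖adjoint (W c) x‖ = Real.sqrt (‖adjoint (W c) x‖ ^ 2) :=
          (Real.sqrt_sq (norm_nonneg _)).symm
      _ = Real.sqrt (‖x‖ ^ 2) := by rw [h2]
      _ = ‖x‖ := Real.sqrt_sq (norm_nonneg _)
  set u : C → H := fun c => Q c ψ with hudef
  have hunorm : ∀ c, ‖P c (W c ψ)‖ = ‖u c‖ := by
    intro c
    simp [hudef, hQdef, comp_apply, hWnorm]
  have hδnorm : ∀ c₁ c₂, ‖P c₂ (W c₂ (adjoint (W c₁) (P c₁ (W c₁ ψ))))‖ = ‖Q c₂ (u c₁)‖ := by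
    intro c₁ c₂
    simp [hudef, hQdef, comp_apply, hWnorm]
  set S : ℝ := ∑ c, ‖u c‖ ^ 2 with hSdef
  set D : ℝ := ∑ c₁, ∑ c₂, ‖Q c₂ (u c₁)‖ ^ 2 with hDdef
  have hεS : ε = n⁻¹ * S := by
    rw [hε, hSdef]
    congr 1
    exact Finset.sum_congr rfl fun c _ => by rw [hunorm c]
  have hδD : δ = (n ^ 2)⁻¹ * D := by
    rw [hδ, hDdef]
    congr 1
    exact Finset.sum_congr rfl fun c₁ _ => Finset.sum_congr rfl fun c₂ _ => by
      rw [hδnorm c₁ c₂]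
  have hS0 : 0 ≤ S := Finset.sum_nonneg fun c _ => by positivity
  have hD0 : 0 ≤ D := Finset.sum_nonneg fun c _ => Finset.sum_nonneg fun c' _ => by positivity
  set s : H := ∑ c, u c with hsdef
  -- Step 1 : S ≤ ‖s‖
  have step1 : S ≤ ‖s‖ := by
    have h1 : ∀ c, RCLike.re (⟪ψ, u c⟫_ℂ) = ‖u c‖ ^ 2 := by
      intro c
      have hQu : Q c (u c) = u c := hQQ c ψ
      have : ⟪ψ, u c⟫_ℂ = ⟪u c, u c⟫_ℂ := by
        conv_lhs => rw [show u c = Q c (u c) from hQu.symm]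
        rw [← hQinner]
      rw [this, inner_self_eq_norm_sq]
    have h2 : RCLike.re (⟪ψ, s⟫_ℂ) = S := by
      rw [hsdef, inner_sum, map_sum, hSdef]
      exact Finset.sum_congr rfl fun c _ => h1 c
    calc S = RCLike.re (⟪ψ, s⟫_ℂ) := h2.symm
      _ ≤ ‖ψ‖ * ‖s‖ := re_inner_le_norm _ _
      _ = ‖s‖ := by rw [hψ, one_mul]
  -- Step 2 : ‖s‖² ≤ ∑ ‖u c‖ * ‖Q c s‖
  have step2 : ‖s‖ ^ 2 ≤ ∑ c, ‖u c‖ * ‖Q c s‖ := by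
    have h1 : ∀ c, RCLike.re (⟪u c, s⟫_ℂ) ≤ ‖u c‖ * ‖Q c s‖ := by
      intro c
      have hQu : Q c (u c) = u c := hQQ c ψ
      have he : ⟪u c, s⟫_ℂ = ⟪u c, Q c s⟫_ℂ := by
        conv_lhs => rw [show u c = Q c (u c) from hQu.symm]
        rw [hQinner]
      rw [he]
      exact re_inner_le_norm _ _
    have h2 : RCLike.re (⟪s, s⟫_ℂ) = ∑ c, RCLike.re (⟪u c, s⟫_ℂ) := by
      conv_lhs => rw [hsdef]
      rw [sum_inner, map_sum]
    calc ‖s‖ ^ 2 = RCLike.re (⟪s, s⟫_ℂ) := (inner_self_eq_norm_sq s).symm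
      _ = ∑ c, RCLike.re (⟪u c, s⟫_ℂ) := h2
      _ ≤ ∑ c, ‖u c‖ * ‖Q c s‖ := Finset.sum_le_sum fun c _ => h1 c
  -- Step 3 : Cauchy-Schwarz
  set T : ℝ := ∑ c, ‖Q c s‖ ^ 2 with hTdef
  have step3 : (∑ c, ‖u c‖ * ‖Q c s‖) ^ 2 ≤ S * T :=
    Finset.sum_mul_sq_le_sq_mul_sq _ _ _
  -- Step 4 : T ≤ n * D
  have step4 : T ≤ n * D := by
    have h1 : ∀ c₂, ‖Q c₂ s‖ ^ 2 ≤ n * ∑ c₁, ‖Q c₂ (u c₁)‖ ^ 2 := by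
      intro c₂
      have hle : ‖Q c₂ s‖ ≤ ∑ c₁, ‖Q c₂ (u c₁)‖ := by
        rw [hsdef, map_sum]
        exact norm_sum_le _ _
      have hsq : ‖Q c₂ s‖ ^ 2 ≤ (∑ c₁, ‖Q c₂ (u c₁)‖) ^ 2 := by
        apply pow_le_pow_left₀ (norm_nonneg _) hle
      refine hsq.trans ?_
      have := sq_sum_le_card_mul_sum_sq (s := (Finset.univ : Finset C))
        (f := fun c₁ => ‖Q c₂ (u c₁)‖)
      simpa [hn] using this
    calc T ≤ ∑ c₂, n * ∑ c₁, ‖Q c₂ (u c₁)‖ ^ 2 := Finset.sum_le_sum fun c₂ _ => h1 c₂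
      _ = n * ∑ c₂, ∑ c₁, ‖Q c₂ (u c₁)‖ ^ 2 := by rw [Finset.mul_sum]
      _ = n * D := by rw [hDdef, Finset.sum_comm]
  -- Combine : S^4 ≤ S * (n * D)
  have hT0 : 0 ≤ T := Finset.sum_nonneg fun c _ => by positivity
  have hsum0 : 0 ≤ ∑ c, ‖u c‖ * ‖Q c s‖ :=
    Finset.sum_nonneg fun c _ => mul_nonneg (norm_nonneg _) (norm_nonneg _)
  have hmain : S ^ 4 ≤ S * (n * D) := by
    have h1 : S ^ 2 ≤ ‖s‖ ^ 2 := pow_le_pow_left₀ hS0 step1 2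
    have h2 : (‖s‖ ^ 2) ^ 2 ≤ (∑ c, ‖u c‖ * ‖Q c s‖) ^ 2 :=
      pow_le_pow_left₀ (by positivity) step2 2
    have h3 : S * T ≤ S * (n * D) := mul_le_mul_of_nonneg_left step4 hS0
    calc S ^ 4 = (S ^ 2) ^ 2 := by ring
      _ ≤ (‖s‖ ^ 2) ^ 2 := pow_le_pow_left₀ (by positivity) h1 2
      _ ≤ (∑ c, ‖u c‖ * ‖Q c s‖) ^ 2 := h2
      _ ≤ S * T := step3
      _ ≤ S * (n * D) := h3
  -- Conclude
  rcases eq_or_lt_of_le hS0 with hSz | hSpos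
  · rw [hεS, ← hSz, hδD]
    norm_num
    exact mul_nonneg (by positivity) hD0
  · have hS3 : S ^ 3 ≤ n * D := by
      have := hmain
      nlinarith [hSpos]
    rw [hεS, hδD]
    rw [mul_pow]
    have hni : (0:ℝ) < n⁻¹ := inv_pos.mpr hn0
    have key : (n⁻¹) ^ 3 * S ^ 3 ≤ (n ^ 2)⁻¹ * D := by
      have : (n⁻¹) ^ 3 * S ^ 3 ≤ (n⁻¹) ^ 3 * (n * D) :=
        mul_le_mul_of_nonneg_left hS3 (by positivity)
      refine this.trans_eq ?_
      field_simp
    exact key
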